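/- Let D ≥ 2 and let (G_n) be a weakly convergent sequence of finite connected graphs with all vertex degrees ≤ D and |V(G_n)| → ∞. Then: (a) for every j ≥ 1 the normalized coefficients N̄_j(G_n) := (1/|V(G_n)|)·Σ_{x ∈ V(G_n)} N_j(x) converge to a limit N̄_j as n → ∞; and (b) the normalized Zeta functions Z_n(u) := exp(Σ_{j≥1} (N̄_j(G_n)/j) u^j) converge to Z(u) := exp(Σ_{j≥1} (N̄_j/j) u^j) uniformly on every compact subset of the open disc {u ∈ ℂ : |u| < (D−1)^{−1}}. -/

import Mathlib

open Filter

/-- A closed path of length `n` in `G`, encoded as an `n`-periodic sequence of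
vertices whose consecutive members are adjacent; its edges are
`e_i = (c (i-1), c i)` for `1 ≤ i ≤ n`. -/
def IsClosedPath {V : Type*} (G : SimpleGraph V) (n : ℕ) (c : ℕ → V) : Prop :=
  (∀ i, c (i + n) = c i) ∧ ∀ i, G.Adj (c i) (c (i + 1))

/-- For an `n`-periodic closed path, being reduced (proper/backtrack-free and
without a tail) is equivalent to `c (i + 2) ≠ c i` for all `i`. -/
def IsReducedCP {V : Type*} (c : ℕ → V) : Prop := ∀ i, c (i + 2) ≠ c i

/-- A closed path of length `n` is primitive if it is not obtained by going
`m ≥ 2` times around a shorter closed path. -/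
def IsPrimitiveCP {V : Type*} (n : ℕ) (c : ℕ → V) : Prop :=
  ¬ ∃ d, d ∣ n ∧ d < n ∧ ∀ i, c (i + d) = c i

/-- `Ncount G j x`: the number of reduced closed paths of length `j` in `G`
starting at `x`. -/
noncomputable def Ncount {V : Type*} (G : SimpleGraph V) (j : ℕ) (x : V) : ℕ :=
  Nat.card {c : ℕ → V // IsClosedPath G j c ∧ IsReducedCP c ∧ c 0 = x}

/-- `Pcount G j x`: the number of primitive reduced closed paths of length `j`
in `G` starting at `x`. -/
noncomputable def Pcount {V : Type*} (G : SimpleGraph V) (j : ℕ) (x : V) : ℕ :=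
  Nat.card {c : ℕ → V // IsClosedPath G j c ∧ IsReducedCP c ∧ IsPrimitiveCP j c ∧ c 0 = x}

/-- The combinatorial ball of radius `r` around `x`: all vertices of the
connected component of `x` at combinatorial distance at most `r` from `x`. -/
def ballSet {V : Type*} (G : SimpleGraph V) (x : V) (r : ℕ) : Set V :=
  {z | G.Reachable x z ∧ G.dist x z ≤ r}

lemma self_mem_ballSet {V : Type*} (G : SimpleGraph V) (x : V) (r : ℕ) :
    x ∈ ballSet G x r :=
  ⟨SimpleGraph.Reachable.refl x, by simp [SimpleGraph.dist_self]⟩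

/-- `BallIso G x r H h`: the rooted `r`-ball `B_r^G(x)` is isomorphic, as a
rooted graph, to the rooted graph `(H, h)`. -/
def BallIso {V W : Type*} (G : SimpleGraph V) (x : V) (r : ℕ)
    (H : SimpleGraph W) (h : W) : Prop :=
  ∃ φ : ballSet G x r ≃ W,
    φ ⟨x, self_mem_ballSet G x r⟩ = h ∧
    ∀ a b : ballSet G x r, H.Adj (φ a) (φ b) ↔ G.Adj a b

/-- The averaged number of reduced closed paths of length `j` per vertex of a
finite graph (the coefficient of the normalized Zeta function). -/
noncomputable def avgN {V : Type*} (G : SimpleGraph V) (j : ℕ) : ℝ :=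
  (∑ᶠ x : V, (Ncount G j x : ℝ)) / Nat.card V

-- Auxiliary lemmas

lemma cp_mod {V : Type*} {c : ℕ → V} {j : ℕ} (hp : ∀ i, c (i + j) = c i)
    (hj : 0 < j) (i : ℕ) : c i = c (i % j) := by
  have key : ∀ q r, c (r + j * q) = c r := by
    intro q
    induction q with
    | zero => simp
    | succ q ih => intro r; rw [Nat.mul_succ, ← Nat.add_assoc, hp, ih]
  conv_lhs => rw [← Nat.mod_add_div i j]
  exact key (i / j) (i % j)

lemma cp_exists_walk {V : Type*} {G : SimpleGraph V} {c : ℕ → V}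
    (ha : ∀ i, G.Adj (c i) (c (i + 1))) (k : ℕ) :
    ∃ w : G.Walk (c 0) (c k), w.length = k := by
  induction k with
  | zero => exact ⟨SimpleGraph.Walk.nil, rfl⟩
  | succ k ih =>
      obtain ⟨w, hw⟩ := ih
      exact ⟨w.concat (ha k), by simp [hw]⟩

lemma cp_mem_ball {V : Type*} {G : SimpleGraph V} {c : ℕ → V} {j : ℕ} {x : V}
    (hj : 0 < j) (hc : IsClosedPath G j c) (h0 : c 0 = x) (i : ℕ) :
    c i ∈ ballSet G x j := by
  obtain ⟨hp, ha⟩ := hc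
  have hmod : c i = c (i % j) := cp_mod hp hj i
  obtain ⟨w, hw⟩ := cp_exists_walk ha (i % j)
  rw [hmod]
  subst h0
  exact ⟨w.reachable, le_trans (hw ▸ SimpleGraph.dist_le w) (Nat.mod_lt _ hj).le⟩

lemma ncount_eq_of_ballIso {V W : Type*} {G : SimpleGraph V} {x : V} {j : ℕ}
    {H : SimpleGraph W} {h : W} (hj : 0 < j) (hB : BallIso G x j H h) :
    Ncount G j x = Ncount H j h := by
  obtain ⟨φ, hφ0, hφadj⟩ := hB
  apply Nat.card_congr
  refine
    { toFun := fun p => ⟨fun i => φ ⟨p.1 i, cp_mem_ball hj p.2.1 p.2.2.2 i⟩, ?_, ?_, ?_⟩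
      invFun := fun q => ⟨fun i => ((φ.symm (q.1 i) : ballSet G x j) : V), ?_, ?_, ?_⟩
      left_inv := ?_
      right_inv := ?_ }
  · constructor
    · intro i
      exact congrArg φ (Subtype.ext (p.2.1.1 i))
    · intro i
      exact (hφadj _ _).mpr (p.2.1.2 i)
  · intro i hiq
    exact p.2.2.1 i (congrArg Subtype.val (φ.injective hiq))
  · show φ ⟨p.1 0, _⟩ = h
    rw [← hφ0]
    exact congrArg φ (Subtype.ext p.2.2.2)
  · constructor
    · intro i
      exact congrArg (fun z => ((φ.symm z : ballSet G x j) : V)) (q.2.1.1 i)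
    · intro i
      have := (hφadj (φ.symm (q.1 i)) (φ.symm (q.1 (i + 1)))).mp
      simp only [Equiv.apply_symm_apply] at this
      exact this (q.2.1.2 i)
  · intro i hiq
    exact q.2.2.1 i (φ.symm.injective (Subtype.coe_injective hiq))
  · show ((φ.symm (q.1 0) : ballSet G x j) : V) = x
    rw [q.2.2.2, ← hφ0, Equiv.symm_apply_apply]
  · intro p
    exact Subtype.ext (funext fun i => by simp)
  · intro q
    exact Subtype.ext (funext fun i => by simp)

lemma exists_embed_fin {V : Type*} [Finite V] (s : Set V) (k : ℕ) (hs : s.ncard ≤ k) :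
    Nonempty (s ↪ Fin k) := by
  have : Fintype s := Fintype.ofFinite s
  apply Function.Embedding.nonempty_of_card_le
  rw [Fintype.card_fin]
  rwa [← Nat.card_coe_set_eq, Nat.card_eq_fintype_card] at hs

lemma exists_code1 {V : Type*} [Finite V] (G : SimpleGraph V) (D : ℕ) (hD : 0 < D)
    (hdeg : ∀ v, (G.neighborSet v).ncard ≤ D) :
    ∃ f : V → V → Fin D,
      ∀ v u u', G.Adj v u → G.Adj v u' → f v u = f v u' → u = u' := by
  classical
  have hι : ∀ v : V, Nonempty (G.neighborSet v ↪ Fin D) := fun v =>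
    exists_embed_fin _ _ (hdeg v)
  refine ⟨fun v u => if h : G.Adj v u then (hι v).some ⟨u, h⟩ else ⟨0, hD⟩, ?_⟩
  intro v u u' hu hu' he
  simp only [dif_pos hu, dif_pos hu'] at he
  exact Subtype.mk_eq_mk.mp ((hι v).some.injective he)

lemma exists_code2 {V : Type*} [Finite V] (G : SimpleGraph V) (D : ℕ) (hD : 2 ≤ D)
    (hdeg : ∀ v, (G.neighborSet v).ncard ≤ D) :
    ∃ g : V → V → V → Fin (D - 1),
      ∀ v w u u', G.Adj v w → G.Adj v u → u ≠ w → G.Adj v u' → u' ≠ w →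
        g v w u = g v w u' → u = u' := by
  classical
  have hι : ∀ v w : V, G.Adj v w → Nonempty ((G.neighborSet v \ {w} : Set V) ↪ Fin (D - 1)) := by
    intro v w hw
    apply exists_embed_fin
    have hlt : (G.neighborSet v \ {w}).ncard < (G.neighborSet v).ncard :=
      Set.ncard_diff_singleton_lt_of_mem hw (Set.toFinite _)
    have := hdeg v
    omega
  refine ⟨fun v w u =>
    if h : G.Adj v w ∧ G.Adj v u ∧ u ≠ w then
      (hι v w h.1).some ⟨u, ⟨h.2.1, h.2.2⟩⟩
    else ⟨0, by omega⟩, ?_⟩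
  intro v w u u' hvw hu hne hu' hne' he
  simp only [dif_pos (⟨hvw, hu, hne⟩ : _ ∧ _ ∧ _), dif_pos (⟨hvw, hu', hne'⟩ : _ ∧ _ ∧ _)] at he
  exact Subtype.mk_eq_mk.mp ((hι v w hvw).some.injective he)

lemma ncount_le {V : Type*} [Finite V] {G : SimpleGraph V} {D j : ℕ} (hD : 2 ≤ D)
    (hdeg : ∀ v, (G.neighborSet v).ncard ≤ D) (hj : 0 < j) (x : V) :
    Ncount G j x ≤ D * (D - 1) ^ (j - 1) := by
  obtain ⟨f, hf⟩ := exists_code1 G D (by omega) hdeg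
  obtain ⟨g, hg⟩ := exists_code2 G D hD hdeg
  have hcard : Ncount G j x ≤ Nat.card (Fin D × (Fin (j - 1) → Fin (D - 1))) := by
    apply Nat.card_le_card_of_injective
      (fun p : {c : ℕ → V // IsClosedPath G j c ∧ IsReducedCP c ∧ c 0 = x} =>
        (f (p.1 0) (p.1 1), fun i : Fin (j - 1) => g (p.1 (i.1 + 1)) (p.1 i.1) (p.1 (i.1 + 2))))
    intro p p' hpp
    have h1 := congrArg Prod.fst hpp
    have h2 := congrArg Prod.snd hpp
    simp only at h1 h2
    have e0 : p.1 0 = p'.1 0 := by rw [p.2.2.2, p'.2.2.2]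
    have key : ∀ k, k + 1 ≤ j → p.1 k = p'.1 k ∧ p.1 (k + 1) = p'.1 (k + 1) := by
      intro k
      induction k with
      | zero =>
          intro _
          refine ⟨e0, ?_⟩
          rw [← e0] at h1
          exact hf _ _ _ (p.2.1.2 0) (e0 ▸ p'.2.1.2 0) h1
      | succ k ih =>
          intro hk2
          obtain ⟨ek, ek1⟩ := ih (by omega)
          refine ⟨ek1, ?_⟩
          have hk := congrFun h2 ⟨k, by omega⟩
          simp only at hk
          rw [← ek, ← ek1] at hk
          refine hg (p.1 (k + 1)) (p.1 k) _ _ ((p.2.1.2 k).symm) (p.2.1.2 (k + 1))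
            (p.2.2.1 k) ?_ ?_ hk
          · exact ek1 ▸ p'.2.1.2 (k + 1)
          · exact ek ▸ p'.2.2.1 k
    have hall : ∀ m, m < j → p.1 m = p'.1 m := by
      intro m hm
      match m with
      | 0 => exact e0
      | Nat.succ k => exact (key k (by omega)).2
    refine Subtype.ext (funext fun i => ?_)
    rw [cp_mod p.2.1.1 hj i, cp_mod p'.2.1.1 hj i]
    exact hall _ (Nat.mod_lt _ hj)
  simpa [Nat.card_eq_fintype_card] using hcard

lemma exists_code3 {V : Type*} [Finite V] (G : SimpleGraph V) (D : ℕ)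
    (hdeg : ∀ v, (G.neighborSet v).ncard ≤ D) :
    ∃ f : V → V → Fin (D + 1),
      ∀ v u u', u ∈ insert v (G.neighborSet v) → u' ∈ insert v (G.neighborSet v) →
        f v u = f v u' → u = u' := by
  classical
  have hι : ∀ v : V, Nonempty ((insert v (G.neighborSet v) : Set V) ↪ Fin (D + 1)) := by
    intro v
    apply exists_embed_fin
    exact le_trans (Set.ncard_insert_le _ _) (by have := hdeg v; omega)
  refine ⟨fun v u => if h : u ∈ insert v (G.neighborSet v) then (hι v).some ⟨u, h⟩
    else ⟨0, by omega⟩, ?_⟩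
  intro v u u' hu hu' he
  simp only [dif_pos hu, dif_pos hu'] at he
  exact Subtype.mk_eq_mk.mp ((hι v).some.injective he)

lemma ballSet_card_le {V : Type*} [Finite V] {G : SimpleGraph V} {D : ℕ}
    (hdeg : ∀ v, (G.neighborSet v).ncard ≤ D) (x : V) (r : ℕ) :
    Nat.card (ballSet G x r) ≤ (D + 1) ^ r := by
  obtain ⟨f, hf⟩ := exists_code3 G D hdeg
  have hW : ∀ z : ballSet G x r, ∃ p : ℕ → V, p 0 = x ∧ p r = (z : V) ∧
      ∀ i, p (i + 1) ∈ insert (p i) (G.neighborSet (p i)) := by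
    rintro ⟨z, hzr, hzd⟩
    obtain ⟨w, hw⟩ := hzr.exists_walk_length_eq_dist
    have hlen : w.length ≤ r := by omega
    refine ⟨fun i => w.getVert i, w.getVert_zero, ?_, ?_⟩
    · exact w.getVert_of_length_le (by omega)
    · intro i
      by_cases hi : i < w.length
      · exact Set.mem_insert_of_mem _ (w.adj_getVert_succ hi)
      · show w.getVert (i + 1) ∈ insert (w.getVert i) _
        rw [w.getVert_of_length_le (by omega), w.getVert_of_length_le (by omega)]
        exact Set.mem_insert _ _
  choose p hp0 hpr hpstep using hW
  have hcard : Nat.card (ballSet G x r) ≤ Nat.card (Fin r → Fin (D + 1)) := by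
    apply Nat.card_le_card_of_injective
      (fun z => fun i : Fin r => f (p z i.1) (p z (i.1 + 1)))
    intro z z' hzz
    have hall : ∀ k, k ≤ r → p z k = p z' k := by
      intro k
      induction k with
      | zero => intro _; rw [hp0, hp0]
      | succ k ih =>
          intro hk
          have ek := ih (by omega)
          have hkk := congrFun hzz ⟨k, by omega⟩
          simp only at hkk
          rw [← ek] at hkk
          exact hf _ _ _ (hpstep z k) (ek ▸ hpstep z' k) hkk
    have : (z : V) = (z' : V) := by rw [← hpr z, ← hpr z', hall r le_rfl]
    exact Subtype.coe_injective this
  simpa [Nat.card_eq_fintype_card] using hcard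

lemma exists_ball_rep {V : Type*} [Finite V] (G : SimpleGraph V) {D : ℕ}
    (hdeg : ∀ v, (G.neighborSet v).ncard ≤ D) (x : V) (r : ℕ) :
    ∃ m : ℕ, m ≤ (D + 1) ^ r ∧ ∃ H : SimpleGraph (Fin m), ∃ h : Fin m,
      BallIso G x r H h := by
  have : Finite (ballSet G x r) := Set.toFinite _
  set m := Nat.card (ballSet G x r) with hm
  refine ⟨m, ballSet_card_le hdeg x r, ?_⟩
  let e : ballSet G x r ≃ Fin m := Finite.equivFin _
  refine ⟨⟨fun a b => G.Adj (e.symm a) (e.symm b), ⟨fun a b hab => hab.symm⟩,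
    ⟨fun a hab => G.irrefl hab⟩⟩, e ⟨x, self_mem_ballSet G x r⟩, e, rfl, ?_⟩
  intro a b
  simp only [Equiv.symm_apply_apply]

def RIso {W W' : Type*} (H : SimpleGraph W) (h : W) (H' : SimpleGraph W') (h' : W') : Prop :=
  ∃ ψ : W ≃ W', ψ h = h' ∧ ∀ a b, H'.Adj (ψ a) (ψ b) ↔ H.Adj a b

lemma riso_refl {W : Type*} (H : SimpleGraph W) (h : W) : RIso H h H h :=
  ⟨Equiv.refl W, rfl, fun _ _ => Iff.rfl⟩

lemma riso_symm {W W' : Type*} {H : SimpleGraph W} {h : W} {H' : SimpleGraph W'} {h' : W'}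
    (hr : RIso H h H' h') : RIso H' h' H h := by
  obtain ⟨ψ, hψ, hadj⟩ := hr
  refine ⟨ψ.symm, by rw [← hψ, Equiv.symm_apply_apply], fun a b => ?_⟩
  have := hadj (ψ.symm a) (ψ.symm b)
  simpa using this.symm

lemma riso_trans {W W' W'' : Type*} {H : SimpleGraph W} {h : W} {H' : SimpleGraph W'}
    {h' : W'} {H'' : SimpleGraph W''} {h'' : W''}
    (h1 : RIso H h H' h') (h2 : RIso H' h' H'' h'') : RIso H h H'' h'' := by
  obtain ⟨ψ, hψ, hadj⟩ := h1
  obtain ⟨ψ', hψ', hadj'⟩ := h2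
  exact ⟨ψ.trans ψ', by simp [hψ, hψ'], fun a b => (hadj' (ψ a) (ψ b)).trans (hadj a b)⟩

lemma ballIso_trans_riso {V W W' : Type*} {G : SimpleGraph V} {x : V} {r : ℕ}
    {H : SimpleGraph W} {h : W} {H' : SimpleGraph W'} {h' : W'}
    (hb : BallIso G x r H h) (hr : RIso H h H' h') : BallIso G x r H' h' := by
  obtain ⟨φ, hφ, hφadj⟩ := hb
  obtain ⟨ψ, hψ, hadj⟩ := hr
  exact ⟨φ.trans ψ, by simp [hφ, hψ], fun a b => (hadj (φ a) (φ b)).trans (hφadj a b)⟩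

lemma riso_of_ballIso {V W W' : Type*} {G : SimpleGraph V} {x : V} {r : ℕ}
    {H : SimpleGraph W} {h : W} {H' : SimpleGraph W'} {h' : W'}
    (hb : BallIso G x r H h) (hb' : BallIso G x r H' h') : RIso H h H' h' := by
  obtain ⟨φ, hφ, hφadj⟩ := hb
  obtain ⟨φ', hφ', hφadj'⟩ := hb'
  refine ⟨φ.symm.trans φ', ?_, fun a b => ?_⟩
  · simp only [Equiv.trans_apply, ← hφ, Equiv.symm_apply_apply, hφ']
  · simp only [Equiv.trans_apply]
    exact (hφadj' (φ.symm a) (φ.symm b)).trans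
      (((hφadj (φ.symm a) (φ.symm b)).trans Iff.rfl).symm.trans (by simp [hφadj]))

lemma avgN_nonneg {V : Type*} (G : SimpleGraph V) (j : ℕ) : 0 ≤ avgN G j := by
  apply div_nonneg _ (Nat.cast_nonneg _)
  apply finsum_nonneg
  intro x
  exact Nat.cast_nonneg _

lemma avgN_le {V : Type*} [Finite V] {G : SimpleGraph V} {D j : ℕ} (hD : 2 ≤ D)
    (hdeg : ∀ v, (G.neighborSet v).ncard ≤ D) (hj : 0 < j) :
    avgN G j ≤ (D : ℝ) * ((D : ℝ) - 1) ^ (j - 1) := by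
  classical
  haveI : Fintype V := Fintype.ofFinite V
  have hbound : (0 : ℝ) ≤ (D : ℝ) * ((D : ℝ) - 1) ^ (j - 1) := by
    apply mul_nonneg (Nat.cast_nonneg _)
    apply pow_nonneg
    have : (2 : ℝ) ≤ (D : ℝ) := by exact_mod_cast hD
    linarith
  rcases Nat.eq_zero_or_pos (Nat.card V) with hc | hc
  · rw [avgN, hc]
    simpa using hbound
  · rw [avgN, div_le_iff₀ (by exact_mod_cast hc)]
    rw [finsum_eq_sum_of_fintype]
    calc ∑ x : V, (Ncount G j x : ℝ)
        ≤ ∑ _x : V, (D : ℝ) * ((D : ℝ) - 1) ^ (j - 1) := by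
          apply Finset.sum_le_sum
          intro x _
          have h1 := ncount_le hD hdeg hj x
          have h2 : ((D * (D - 1) ^ (j - 1) : ℕ) : ℝ) = (D : ℝ) * ((D : ℝ) - 1) ^ (j - 1) := by
            push_cast [Nat.cast_sub (by omega : 1 ≤ D)]
            ring
          calc (Ncount G j x : ℝ) ≤ ((D * (D - 1) ^ (j - 1) : ℕ) : ℝ) := by exact_mod_cast h1
            _ = _ := h2
      _ = (D : ℝ) * ((D : ℝ) - 1) ^ (j - 1) * (Nat.card V : ℝ) := by
          rw [Finset.sum_const, Finset.card_univ, Nat.card_eq_fintype_card]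
          simp [mul_comm]

lemma partA {D : ℕ} (hD : 2 ≤ D) {V : ℕ → Type} (hVfin : ∀ n, Finite (V n))
    (G : ∀ n, SimpleGraph (V n))
    (hconn : ∀ n, (G n).Connected)
    (hdeg : ∀ n (x : V n), ((G n).neighborSet x).ncard ≤ D)
    (hweak : ∀ (r : ℕ) (W : Type) (_ : Finite W) (H : SimpleGraph W) (h : W),
      ∃ L : ℝ, Tendsto
        (fun n => (Nat.card {x : V n // BallIso (G n) x r H h} : ℝ) / Nat.card (V n))
        atTop (nhds L))
    (j : ℕ) (hj : 0 < j) :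
    ∃ L : ℝ, Tendsto (fun n => avgN (G n) j) atTop (nhds L) := by
  classical
  haveI := hVfin
  set B := (D + 1) ^ j with hB
  let T := Σ m : Fin (B + 1), SimpleGraph (Fin m.1) × Fin m.1
  haveI : Finite T := by infer_instance
  let S : Setoid T := ⟨fun t t' => RIso t.2.1 t.2.2 t'.2.1 t'.2.2,
    fun t => riso_refl _ _, fun h => riso_symm h, fun h1 h2 => riso_trans h1 h2⟩
  let Q := Quotient S
  haveI : Finite Q := Quotient.finite S
  haveI : Fintype Q := Fintype.ofFinite Q
  have hrep : ∀ n (x : V n), ∃ t : T, BallIso (G n) x j t.2.1 t.2.2 := by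
    intro n x
    obtain ⟨m, hm, H, h, hiso⟩ := exists_ball_rep (G n) (hdeg n) x j
    exact ⟨⟨⟨m, by omega⟩, H, h⟩, hiso⟩
  choose rep hrepspec using hrep
  let cls : ∀ n, V n → Q := fun n x => ⟦rep n x⟧
  have key : ∀ n (x : V n) (q : Q),
      cls n x = q ↔ BallIso (G n) x j q.out.2.1 q.out.2.2 := by
    intro n x q
    constructor
    · intro hq
      have : rep n x ≈ q.out := Quotient.mk_eq_iff_out.mp hq
      exact ballIso_trans_riso (hrepspec n x) this
    · intro hb
      have : rep n x ≈ q.out := riso_of_ballIso (hrepspec n x) hb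
      rw [show q = ⟦q.out⟧ from (Quotient.out_eq q).symm]
      exact Quotient.sound this
  let value : Q → ℕ := fun q => Ncount q.out.2.1 j q.out.2.2
  have hval : ∀ n (x : V n), Ncount (G n) j x = value (cls n x) := by
    intro n x
    exact ncount_eq_of_ballIso hj ((key n x (cls n x)).mp rfl)
  choose Lq hLq using fun q : Q =>
    hweak j (Fin q.out.1.1) inferInstance q.out.2.1 q.out.2.2
  have havg : ∀ n, avgN (G n) j = ∑ q : Q, (value q : ℝ) *
      ((Nat.card {x : V n // BallIso (G n) x j q.out.2.1 q.out.2.2} : ℝ) /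
        Nat.card (V n)) := by
    intro n
    haveI : Fintype (V n) := Fintype.ofFinite (V n)
    have h1 : (∑ᶠ x : V n, (Ncount (G n) j x : ℝ)) =
        ∑ x : V n, (value (cls n x) : ℝ) := by
      rw [finsum_eq_sum_of_fintype]
      exact Finset.sum_congr rfl fun x _ => by rw [hval n x]
    have h2 : ∑ x : V n, (value (cls n x) : ℝ) =
        ∑ q : Q, ∑ x ∈ Finset.univ.filter (fun x => cls n x = q), (value q : ℝ) := by
      rw [Finset.sum_fiberwise_eq_sum_filter' Finset.univ Finset.univ (cls n)
        (fun q => (value q : ℝ))]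
      simp
    have h3 : ∀ q : Q, (Finset.univ.filter (fun x => cls n x = q)).card =
        Nat.card {x : V n // BallIso (G n) x j q.out.2.1 q.out.2.2} := by
      intro q
      rw [Nat.card_eq_fintype_card, Fintype.card_subtype]
      congr 1
      apply Finset.filter_congr
      intro x _
      first
        | exact key n x q
        | exact (key n x q).symm
        | (constructor <;> intro h <;> [exact (key n x q).mpr h; exact (key n x q).mp h])
    rw [avgN, h1, h2, Finset.sum_div]
    apply Finset.sum_congr rfl
    intro q _
    rw [Finset.sum_const, h3 q]
    rw [nsmul_eq_mul]
    ring
  refine ⟨∑ q : Q, (value q : ℝ) * Lq q, ?_⟩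
  have : Tendsto (fun n => ∑ q : Q, (value q : ℝ) *
      ((Nat.card {x : V n // BallIso (G n) x j q.out.2.1 q.out.2.2} : ℝ) /
        Nat.card (V n))) atTop (nhds (∑ q : Q, (value q : ℝ) * Lq q)) := by
    apply tendsto_finset_sum
    intro q _
    exact (hLq q).const_mul _
  exact Tendsto.congr (fun n => (havg n).symm) this

lemma partB {D : ℕ} (hD : 2 ≤ D) (a : ℕ → ℕ → ℝ) (b : ℕ → ℝ)
    (ha0 : ∀ n j, 0 ≤ a n j) (haB : ∀ n j, a n j ≤ (D : ℝ) * ((D : ℝ) - 1) ^ j)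
    (hb0 : ∀ j, 0 ≤ b j) (hbB : ∀ j, b j ≤ (D : ℝ) * ((D : ℝ) - 1) ^ j)
    (hab : ∀ j, Tendsto (fun n => a n j) atTop (nhds (b j)))
    (K : Set ℂ) (hK : K ⊆ Metric.ball 0 ((D : ℝ) - 1)⁻¹) (hKc : IsCompact K) :
    TendstoUniformlyOn
      (fun n u => Complex.exp (∑' j : ℕ, ((a n j : ℂ) / ((j : ℂ) + 1)) * u ^ (j + 1)))
      (fun u => Complex.exp (∑' j : ℕ, ((b j : ℂ) / ((j : ℂ) + 1)) * u ^ (j + 1)))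
      atTop K := by
  rcases K.eq_empty_or_nonempty with hKe | hKne
  · subst hKe; exact tendstoUniformlyOn_empty
  have hDr : (1 : ℝ) ≤ (D : ℝ) - 1 := by
    have : (2 : ℝ) ≤ (D : ℝ) := by exact_mod_cast hD
    linarith
  have hDr0 : (0 : ℝ) < (D : ℝ) - 1 := by linarith
  -- choose ρ
  obtain ⟨z, hzK, hzmax'⟩ := hKc.exists_isMaxOn hKne continuous_norm.continuousOn
  have hzmax : ∀ u ∈ K, ‖u‖ ≤ ‖z‖ := fun u hu => hzmax' hu
  set ρ := ‖z‖ with hρ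
  have hρ0 : 0 ≤ ρ := norm_nonneg _
  have hρlt : ρ < ((D : ℝ) - 1)⁻¹ := by
    have := hK hzK
    rwa [Metric.mem_ball, dist_zero_right] at this
  set r : ℝ := ((D : ℝ) - 1) * ρ with hr
  have hr0 : 0 ≤ r := by positivity
  have hr1 : r < 1 := by
    rw [hr]
    calc ((D : ℝ) - 1) * ρ < ((D : ℝ) - 1) * ((D : ℝ) - 1)⁻¹ := by
          exact mul_lt_mul_of_pos_left hρlt hDr0
      _ = 1 := mul_inv_cancel₀ (ne_of_gt hDr0)
  have hgeom : Summable (fun j : ℕ => (D : ℝ) * ρ * r ^ j) :=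
    (summable_geometric_of_lt_one hr0 hr1).mul_left _
  -- norm bound for terms
  have hnorm : ∀ (c : ℝ) (j : ℕ) (u : ℂ), u ∈ K →
      ‖((c : ℂ) / ((j : ℂ) + 1)) * u ^ (j + 1)‖ ≤ |c| * ρ ^ (j + 1) := by
    intro c j u hu
    have hu' : ‖u‖ ≤ ρ := hzmax u hu
    have h1 : ‖((c : ℂ) / ((j : ℂ) + 1))‖ ≤ |c| := by
      rw [norm_div]
      have h2 : (1 : ℝ) ≤ ‖((j : ℂ) + 1)‖ := by
        have : ((j : ℂ) + 1) = ((j + 1 : ℕ) : ℂ) := by push_cast; ring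
        rw [this, Complex.norm_natCast]
        exact_mod_cast Nat.succ_le_succ (Nat.zero_le j)
      rw [Complex.norm_real, Real.norm_eq_abs]
      calc |c| / ‖((j : ℂ) + 1)‖ ≤ |c| / 1 := by
            apply div_le_div_of_nonneg_left (abs_nonneg c) one_pos h2
        _ = |c| := div_one _
    calc ‖((c : ℂ) / ((j : ℂ) + 1)) * u ^ (j + 1)‖
        = ‖((c : ℂ) / ((j : ℂ) + 1))‖ * ‖u‖ ^ (j + 1) := by rw [norm_mul, norm_pow]
      _ ≤ |c| * ρ ^ (j + 1) := by
          apply mul_le_mul h1 (pow_le_pow_left₀ (norm_nonneg _) hu' _)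
            (pow_nonneg (norm_nonneg _) _) (abs_nonneg c)
  have hbnd : ∀ (c : ℝ) (j : ℕ), 0 ≤ c → c ≤ (D : ℝ) * ((D : ℝ) - 1) ^ j →
      c * ρ ^ (j + 1) ≤ (D : ℝ) * ρ * r ^ j := by
    intro c j hc hcb
    have : c * ρ ^ (j + 1) ≤ ((D : ℝ) * ((D : ℝ) - 1) ^ j) * ρ ^ (j + 1) := by
      apply mul_le_mul_of_nonneg_right hcb (pow_nonneg hρ0 _)
    calc c * ρ ^ (j + 1) ≤ ((D : ℝ) * ((D : ℝ) - 1) ^ j) * ρ ^ (j + 1) := this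
      _ = (D : ℝ) * ρ * r ^ j := by rw [hr, mul_pow, pow_succ]; ring
  -- summability of the complex series
  have hsuma : ∀ n (u : ℂ), u ∈ K →
      Summable (fun j : ℕ => ((a n j : ℂ) / ((j : ℂ) + 1)) * u ^ (j + 1)) := by
    intro n u hu
    apply Summable.of_norm_bounded hgeom
    intro j
    refine le_trans (hnorm _ j u hu) ?_
    rw [abs_of_nonneg (ha0 n j)]
    exact hbnd _ j (ha0 n j) (haB n j)
  have hsumb : ∀ (u : ℂ), u ∈ K →
      Summable (fun j : ℕ => ((b j : ℂ) / ((j : ℂ) + 1)) * u ^ (j + 1)) := by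
    intro u hu
    apply Summable.of_norm_bounded hgeom
    intro j
    refine le_trans (hnorm _ j u hu) ?_
    rw [abs_of_nonneg (hb0 j)]
    exact hbnd _ j (hb0 j) (hbB j)
  -- the uniform error bound
  set s : ℕ → ℝ := fun n => ∑' j : ℕ, |a n j - b j| * ρ ^ (j + 1) with hs
  have hdiffsum : ∀ n, Summable (fun j : ℕ => |a n j - b j| * ρ ^ (j + 1)) := by
    intro n
    apply Summable.of_norm_bounded (hgeom.mul_left 2)
    intro j
    rw [Real.norm_eq_abs, abs_of_nonneg (by positivity)]
    have : |a n j - b j| ≤ 2 * ((D : ℝ) * ((D : ℝ) - 1) ^ j) := by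
      rw [abs_sub_le_iff]
      constructor
      · have := haB n j; have := hb0 j
        have hDD : 0 ≤ (D : ℝ) * ((D : ℝ) - 1) ^ j := by positivity
        linarith
      · have := hbB j; have := ha0 n j
        have hDD : 0 ≤ (D : ℝ) * ((D : ℝ) - 1) ^ j := by positivity
        linarith
    calc |a n j - b j| * ρ ^ (j + 1)
        ≤ (2 * ((D : ℝ) * ((D : ℝ) - 1) ^ j)) * ρ ^ (j + 1) := by
          apply mul_le_mul_of_nonneg_right this (pow_nonneg hρ0 _)
      _ = 2 * ((D : ℝ) * ρ * r ^ j) := by rw [hr, mul_pow, pow_succ]; ring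
  have hstend : Tendsto s atTop (nhds 0) := by
    have h0 : (0 : ℝ) = ∑' (_j : ℕ), (0 : ℝ) := by simp
    rw [h0]
    apply tendsto_tsum_of_dominated_convergence (hgeom.mul_left 2)
    · intro j
      have : Tendsto (fun n => a n j - b j) atTop (nhds 0) := by
        simpa using (hab j).sub_const (b j)
      have habs : Tendsto (fun n => |a n j - b j|) atTop (nhds 0) := by
        simpa using this.abs
      simpa using habs.mul_const (ρ ^ (j + 1))
    · apply Eventually.of_forall
      intro n j
      rw [Real.norm_eq_abs, abs_of_nonneg (by positivity)]
      have : |a n j - b j| ≤ 2 * ((D : ℝ) * ((D : ℝ) - 1) ^ j) := by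
        rw [abs_sub_le_iff]
        constructor
        · have := haB n j; have := hb0 j
          have hDD : 0 ≤ (D : ℝ) * ((D : ℝ) - 1) ^ j := by positivity
          linarith
        · have := hbB j; have := ha0 n j
          have hDD : 0 ≤ (D : ℝ) * ((D : ℝ) - 1) ^ j := by positivity
          linarith
      calc |a n j - b j| * ρ ^ (j + 1)
          ≤ (2 * ((D : ℝ) * ((D : ℝ) - 1) ^ j)) * ρ ^ (j + 1) := by
            apply mul_le_mul_of_nonneg_right this (pow_nonneg hρ0 _)
        _ = 2 * ((D : ℝ) * ρ * r ^ j) := by rw [hr, mul_pow, pow_succ]; ring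
  have hdist : ∀ n (u : ℂ), u ∈ K →
      ‖(∑' j : ℕ, ((b j : ℂ) / ((j : ℂ) + 1)) * u ^ (j + 1)) -
        (∑' j : ℕ, ((a n j : ℂ) / ((j : ℂ) + 1)) * u ^ (j + 1))‖ ≤ s n := by
    intro n u hu
    rw [← Summable.tsum_sub (hsumb u hu) (hsuma n u hu)]
    have heq : ∀ j : ℕ, ((b j : ℂ) / ((j : ℂ) + 1)) * u ^ (j + 1) -
        ((a n j : ℂ) / ((j : ℂ) + 1)) * u ^ (j + 1) =
        (((b j - a n j : ℝ) : ℂ) / ((j : ℂ) + 1)) * u ^ (j + 1) := by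
      intro j
      push_cast
      ring
    rw [tsum_congr heq]
    have hptw : ∀ j : ℕ, ‖(((b j - a n j : ℝ) : ℂ) / ((j : ℂ) + 1)) * u ^ (j + 1)‖ ≤
        |a n j - b j| * ρ ^ (j + 1) := by
      intro j
      have := hnorm (b j - a n j) j u hu
      rwa [abs_sub_comm] at this
    have hsn : Summable (fun j : ℕ => ‖(((b j - a n j : ℝ) : ℂ) / ((j : ℂ) + 1)) * u ^ (j + 1)‖) :=
      Summable.of_nonneg_of_le (fun j => norm_nonneg _) hptw (hdiffsum n)
    refine le_trans (norm_tsum_le_tsum_norm hsn) ?_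
    exact Summable.tsum_le_tsum hptw hsn (hdiffsum n)
  -- uniform bound M on the sums
  set M : ℝ := ∑' j : ℕ, (D : ℝ) * ρ * r ^ j with hM
  have hMa : ∀ n (u : ℂ), u ∈ K →
      ‖∑' j : ℕ, ((a n j : ℂ) / ((j : ℂ) + 1)) * u ^ (j + 1)‖ ≤ M := by
    intro n u hu
    have hptw : ∀ j : ℕ, ‖((a n j : ℂ) / ((j : ℂ) + 1)) * u ^ (j + 1)‖ ≤
        (D : ℝ) * ρ * r ^ j := by
      intro j
      refine le_trans (hnorm _ j u hu) ?_
      rw [abs_of_nonneg (ha0 n j)]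
      exact hbnd _ j (ha0 n j) (haB n j)
    have hsn : Summable (fun j : ℕ => ‖((a n j : ℂ) / ((j : ℂ) + 1)) * u ^ (j + 1)‖) :=
      Summable.of_nonneg_of_le (fun j => norm_nonneg _) hptw hgeom
    exact le_trans (norm_tsum_le_tsum_norm hsn) (Summable.tsum_le_tsum hptw hsn hgeom)
  have hMb : ∀ (u : ℂ), u ∈ K →
      ‖∑' j : ℕ, ((b j : ℂ) / ((j : ℂ) + 1)) * u ^ (j + 1)‖ ≤ M := by
    intro u hu
    have hptw : ∀ j : ℕ, ‖((b j : ℂ) / ((j : ℂ) + 1)) * u ^ (j + 1)‖ ≤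
        (D : ℝ) * ρ * r ^ j := by
      intro j
      refine le_trans (hnorm _ j u hu) ?_
      rw [abs_of_nonneg (hb0 j)]
      exact hbnd _ j (hb0 j) (hbB j)
    have hsn : Summable (fun j : ℕ => ‖((b j : ℂ) / ((j : ℂ) + 1)) * u ^ (j + 1)‖) :=
      Summable.of_nonneg_of_le (fun j => norm_nonneg _) hptw hgeom
    exact le_trans (norm_tsum_le_tsum_norm hsn) (Summable.tsum_le_tsum hptw hsn hgeom)
  -- uniform continuity of exp on the closed ball of radius M
  have hexp : UniformContinuousOn Complex.exp (Metric.closedBall 0 M) :=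
    (isCompact_closedBall (0 : ℂ) M).uniformContinuousOn_of_continuous
      Complex.continuous_exp.continuousOn
  rw [Metric.tendstoUniformlyOn_iff]
  intro ε hε
  obtain ⟨δ, hδ0, hδ⟩ := Metric.uniformContinuousOn_iff.mp hexp ε hε
  have hev : ∀ᶠ n in atTop, s n < δ := hstend.eventually_lt_const hδ0
  filter_upwards [hev] with n hn u hu
  have h1 : (∑' j : ℕ, ((b j : ℂ) / ((j : ℂ) + 1)) * u ^ (j + 1)) ∈
      Metric.closedBall (0 : ℂ) M := by
    rw [Metric.mem_closedBall, dist_zero_right]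
    exact hMb u hu
  have h2 : (∑' j : ℕ, ((a n j : ℂ) / ((j : ℂ) + 1)) * u ^ (j + 1)) ∈
      Metric.closedBall (0 : ℂ) M := by
    rw [Metric.mem_closedBall, dist_zero_right]
    exact hMa n u hu
  apply hδ _ h1 _ h2
  rw [dist_eq_norm]
  exact lt_of_le_of_lt (hdist n u hu) hn

/-- If `(G_n)` is a weakly convergent sequence of finite
connected graphs with degrees `≤ D` and `|V(G_n)| → ∞`, then the normalized
coefficients `N̄_j(G_n)` converge to some limit `N̄_j` for every `j ≥ 1`, and the
normalized Zeta functions converge to `exp(∑_{j≥1} (N̄_j/j) u^j)` uniformly on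
every compact subset of the disc `{|u| < (D−1)⁻¹}`. -/
theorem weakly_convergent_zeta_convergence
    (D : ℕ) (hD : 2 ≤ D)
    (V : ℕ → Type) (hVfin : ∀ n, Finite (V n))
    (G : ∀ n, SimpleGraph (V n))
    (hconn : ∀ n, (G n).Connected)
    (hdeg : ∀ n (x : V n), ((G n).neighborSet x).ncard ≤ D)
    (hcard : Tendsto (fun n => Nat.card (V n)) atTop atTop)
    (hweak : ∀ (r : ℕ) (W : Type) (_ : Finite W) (H : SimpleGraph W) (h : W),
      ∃ L : ℝ, Tendsto
        (fun n => (Nat.card {x : V n // BallIso (G n) x r H h} : ℝ) / Nat.card (V n))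
        atTop (nhds L)) :
    ∃ Nbar : ℕ → ℝ,
      (∀ j, 1 ≤ j → Tendsto (fun n => avgN (G n) j) atTop (nhds (Nbar j))) ∧
      ∀ K : Set ℂ, K ⊆ Metric.ball 0 ((D : ℝ) - 1)⁻¹ → IsCompact K →
        TendstoUniformlyOn
          (fun n u => Complex.exp
            (∑' j : ℕ, ((avgN (G n) (j + 1) : ℂ) / ((j : ℂ) + 1)) * u ^ (j + 1)))
          (fun u => Complex.exp
            (∑' j : ℕ, ((Nbar (j + 1) : ℂ) / ((j : ℂ) + 1)) * u ^ (j + 1)))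
          atTop K := by
  classical
  have hex : ∀ j : ℕ, 0 < j → ∃ L : ℝ, Tendsto (fun n => avgN (G n) j) atTop (nhds L) :=
    fun j hj => partA hD hVfin G hconn hdeg hweak j hj
  let Nbar : ℕ → ℝ := fun j => if h : 0 < j then (hex j h).choose else 0
  have hNbar : ∀ j, 0 < j → Tendsto (fun n => avgN (G n) j) atTop (nhds (Nbar j)) := by
    intro j hj
    have := (hex j hj).choose_spec
    simpa only [Nbar, dif_pos hj] using this
  refine ⟨Nbar, fun j hj => hNbar j hj, ?_⟩
  intro K hK hKc
  haveI := hVfin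
  have ha0 : ∀ n j, 0 ≤ avgN (G n) (j + 1) := fun n j => avgN_nonneg _ _
  have haB : ∀ n j, avgN (G n) (j + 1) ≤ (D : ℝ) * ((D : ℝ) - 1) ^ j := by
    intro n j
    have := avgN_le (G := G n) hD (hdeg n) (Nat.succ_pos j)
    simpa using this
  have hb : ∀ j, Tendsto (fun n => avgN (G n) (j + 1)) atTop (nhds (Nbar (j + 1))) :=
    fun j => hNbar (j + 1) (Nat.succ_pos j)
  have hb0 : ∀ j, 0 ≤ Nbar (j + 1) := fun j => ge_of_tendsto' (hb j) (fun n => ha0 n j)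
  have hbB : ∀ j, Nbar (j + 1) ≤ (D : ℝ) * ((D : ℝ) - 1) ^ j :=
    fun j => le_of_tendsto' (hb j) (fun n => haB n j)
  exact partB hD (fun n j => avgN (G n) (j + 1)) (fun j => Nbar (j + 1))
    ha0 haB hb0 hbB hb K hK hKc
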